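/- Let X(x,y,z) = (x(y+z), y(x+z), z(x+y)) on ℂ³ and let p = (x,0,0) with x ≠ 0. If (p_n) = (x_n,y_n,z_n) is a sequence in ℂ³ with p_n → p, and (α_n) ⊆ ℂ is a sequence such that α_n · X(p_n) → V = (v₁, 0, 0) ∈ ℂ³, then V = 0. -/
import Mathlib


open Filter

/-- Transversality computation at `p = (x,0,0)`, `x ≠ 0`, for
`X(x,y,z) = (x(y+z), y(x+z), z(x+y))`: if `pₙ → p` and `αₙ • X(pₙ) → (v₁,0,0)`, then
`v₁ = 0`. -/
theorem stmt_11 (x : ℂ) (hx : x ≠ 0)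
    (x' y' z' : ℕ → ℂ) (α : ℕ → ℂ) (v₁ : ℂ)
    (hconv : Tendsto (fun n => (x' n, y' n, z' n)) atTop
      (nhds (x, (0 : ℂ), (0 : ℂ))))
    (hV : Tendsto (fun n =>
        (α n * (x' n * (y' n + z' n)), α n * (y' n * (x' n + z' n)),
          α n * (z' n * (x' n + y' n))))
      atTop (nhds (v₁, (0 : ℂ), (0 : ℂ)))) :
    v₁ = 0 := by
  have hx' : Tendsto x' atTop (nhds x) := (continuous_fst.tendsto _).comp hconv
  have hy' : Tendsto y' atTop (nhds 0) :=
    (continuous_fst.tendsto _).comp ((continuous_snd.tendsto _).comp hconv)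
  have hz' : Tendsto z' atTop (nhds 0) :=
    (continuous_snd.tendsto _).comp ((continuous_snd.tendsto _).comp hconv)
  have hA : Tendsto (fun n => α n * (x' n * (y' n + z' n))) atTop (nhds v₁) :=
    (continuous_fst.tendsto _).comp hV
  have hB : Tendsto (fun n => α n * (y' n * (x' n + z' n))) atTop (nhds 0) :=
    (continuous_fst.tendsto _).comp ((continuous_snd.tendsto _).comp hV)
  have hC : Tendsto (fun n => α n * (z' n * (x' n + y' n))) atTop (nhds 0) :=
    (continuous_snd.tendsto _).comp ((continuous_snd.tendsto _).comp hV)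
  -- y_n C_n + z_n B_n = α_n y_n z_n (2x_n + y_n + z_n) → 0
  have hD : Tendsto (fun n => α n * (y' n * z' n) * (2 * x' n + y' n + z' n))
      atTop (nhds 0) := by
    have h := (hy'.mul hC).add (hz'.mul hB)
    simp only [zero_mul, add_zero] at h
    convert h using 2 with n
    ring
  have hden : Tendsto (fun n => 2 * x' n + y' n + z' n) atTop (nhds (2 * x)) := by
    have h2 : Tendsto (fun n => (2:ℂ) * x' n) atTop (nhds (2 * x)) :=
      (tendsto_const_nhds (x := (2:ℂ))).mul hx'
    simpa using (h2.add hy').add hz'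
  have h2x : (2 : ℂ) * x ≠ 0 := by
    simpa using hx
  have hyz : Tendsto (fun n => α n * (y' n * z' n)) atTop (nhds 0) := by
    have h := hD.div hden h2x
    have heq : (fun n => α n * (y' n * z' n) * (2 * x' n + y' n + z' n) /
        (2 * x' n + y' n + z' n)) =ᶠ[atTop] (fun n => α n * (y' n * z' n)) := by
      have : ∀ᶠ n in atTop, 2 * x' n + y' n + z' n ≠ 0 := by
        have : ∀ᶠ n in atTop, 2 * x' n + y' n + z' n ∈ {(0:ℂ)}ᶜ :=
          hden (isOpen_compl_singleton.mem_nhds h2x)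
        simpa using this
      filter_upwards [this] with n hn
      field_simp
    have := h.congr' heq
    simpa using this
  -- A_n = (B_n + C_n) - 2 α_n y_n z_n → 0
  have hA0 : Tendsto (fun n => α n * (x' n * (y' n + z' n))) atTop (nhds 0) := by
    have h := (hB.add hC).sub ((tendsto_const_nhds (x := (2:ℂ))).mul hyz)
    simp only [add_zero, mul_zero, sub_zero] at h
    convert h using 2 with n
    ring
  exact tendsto_nhds_unique hA hA0
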